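/- arXiv:1010.0330 — 2 statements merged into one kernel-verified Lean document; each statement's English description precedes it below -/
import Mathlib

section
/- Let g be a continuous probability density on [0,∞) with distribution G, and for K ∈ D_ℝ[0,∞) (càdlàg) define the linear functional 𝒦_t(f) = f(0)K(t) + ∫₀ᵗ K(u)·ξ_f(t-u) du for absolutely continuous f, where ξ_f = (f(1-G))' = f'(1-G) - fg. Then for f in the Sobolev space H²[0,∞), T < ∞, and 0 ≤ s ≤ t ≤ T: ∫₀ˢ |ξ_f(t-u) - ξ_f(s-u)| du ≤ (T^{1/2}(w_G(t-s) + w_g(t-s)) + (T+1)(t-s)^{1/2})·‖f‖_{H²}, where w_G, w_g are the moduli of continuity of G and g on [0,T]. -/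
open MeasureTheory Set

lemma cs_aux {h : ℝ → ℝ} (hm : Measurable h)
    (hL2 : IntegrableOn (fun x => h x ^ 2) (Ici 0)) {a b : ℝ} (ha : 0 ≤ a) (hab : a ≤ b) :
    ∫ x in a..b, |h x| ≤ Real.sqrt (b - a) * Real.sqrt (∫ x in Ici (0:ℝ), h x ^ 2) := by
  have hsub : Ioc a b ⊆ Ici (0:ℝ) := fun x hx => le_trans ha (le_of_lt hx.1)
  have hint2 : IntegrableOn (fun x => h x ^ 2) (Ioc a b) := hL2.mono_set hsub
  haveI : IsFiniteMeasure (volume.restrict (Ioc a b)) :=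
    ⟨by rw [Measure.restrict_apply_univ]; exact measure_Ioc_lt_top⟩
  have hmem : MemLp h 2 (volume.restrict (Ioc a b)) :=
    (memLp_two_iff_integrable_sq hm.aestronglyMeasurable.restrict).mpr hint2
  have hpq : Real.HolderConjugate 2 2 := Real.HolderConjugate.two_two
  have h2eq : ENNReal.ofReal (2:ℝ) = 2 := by norm_num
  have h1 : MemLp (fun _ : ℝ => (1:ℝ)) (ENNReal.ofReal (2:ℝ)) (volume.restrict (Ioc a b)) := by
    rw [h2eq]; exact memLp_const 1
  have h2 : MemLp (fun x => |h x|) (ENNReal.ofReal (2:ℝ)) (volume.restrict (Ioc a b)) := by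
    rw [h2eq]
    have := hmem.norm
    simpa [Real.norm_eq_abs] using this
  have hold := integral_mul_le_Lp_mul_Lq_of_nonneg (μ := volume.restrict (Ioc a b)) hpq
    (ae_of_all _ fun _ => zero_le_one) (ae_of_all _ fun x => abs_nonneg (h x)) h1 h2
  rw [intervalIntegral.integral_of_le hab]
  have e1 : ∫ x in Ioc a b, (fun _ : ℝ => (1:ℝ)) x ^ (2:ℝ) = b - a := by
    simp [Real.volume_Ioc, ENNReal.toReal_ofReal (sub_nonneg.mpr hab), hab]
  have e2 : ∫ x in Ioc a b, |h x| ^ (2:ℝ) = ∫ x in Ioc a b, h x ^ 2 := by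
    refine setIntegral_congr_fun measurableSet_Ioc fun x _ => ?_
    rw [show ((2:ℝ)) = ((2:ℕ):ℝ) by norm_num, Real.rpow_natCast, sq_abs]
  calc ∫ x in Ioc a b, |h x| = ∫ x in Ioc a b, (fun _ : ℝ => (1:ℝ)) x * |h x| := by simp
    _ ≤ (∫ x in Ioc a b, (fun _ : ℝ => (1:ℝ)) x ^ (2:ℝ)) ^ ((1:ℝ)/2) *
        (∫ x in Ioc a b, |h x| ^ (2:ℝ)) ^ ((1:ℝ)/2) := hold
    _ = Real.sqrt (b - a) * Real.sqrt (∫ x in Ioc a b, h x ^ 2) := by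
        rw [e1, e2, Real.sqrt_eq_rpow, Real.sqrt_eq_rpow]
    _ ≤ Real.sqrt (b - a) * Real.sqrt (∫ x in Ici (0:ℝ), h x ^ 2) := by
        apply mul_le_mul_of_nonneg_left _ (Real.sqrt_nonneg _)
        apply Real.sqrt_le_sqrt
        exact setIntegral_mono_set hL2 (ae_of_all _ fun x => sq_nonneg _)
          (HasSubset.Subset.eventuallyLE hsub)

lemma diff_bound {F F' : ℝ → ℝ} (hd : ∀ x, HasDerivAt F (F' x) x) (hm : Measurable F')
    (hL2 : IntegrableOn (fun x => F' x ^ 2) (Ici 0)) {a b : ℝ} (ha : 0 ≤ a) (hab : a ≤ b) :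
    |F b - F a| ≤ Real.sqrt (b - a) * Real.sqrt (∫ x in Ici (0:ℝ), F' x ^ 2) := by
  have hsub : Ioc a b ⊆ Ici (0:ℝ) := fun x hx => le_trans ha (le_of_lt hx.1)
  haveI : IsFiniteMeasure (volume.restrict (Ioc a b)) :=
    ⟨by rw [Measure.restrict_apply_univ]; exact measure_Ioc_lt_top⟩
  have hc : Integrable (fun _ : ℝ => (1:ℝ)) (volume.restrict (Ioc a b)) := integrable_const 1
  have hsq : Integrable (fun x => F' x ^ 2) (volume.restrict (Ioc a b)) := hL2.mono_set hsub
  have hbnd : Integrable (fun x => (1 + F' x ^ 2) / 2) (volume.restrict (Ioc a b)) :=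
    (hc.add hsq).div_const 2
  have hint : IntervalIntegrable F' volume a b := by
    rw [intervalIntegrable_iff_integrableOn_Ioc_of_le hab]
    refine hbnd.mono' hm.aestronglyMeasurable.restrict (ae_of_all _ fun x => ?_)
    rw [Real.norm_eq_abs]
    nlinarith [sq_nonneg (|F' x| - 1), sq_abs (F' x), abs_nonneg (F' x)]
  have heq : F b - F a = ∫ x in a..b, F' x :=
    (intervalIntegral.integral_eq_sub_of_hasDerivAt (fun x _ => hd x) hint).symm
  rw [heq]
  calc |∫ x in a..b, F' x| ≤ ∫ x in a..b, |F' x| :=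
        intervalIntegral.abs_integral_le_integral_abs hab
    _ ≤ _ := cs_aux hm hL2 ha hab

/-- Modulus-of-continuity estimate for the convolution kernel `ξ_f = f'(1-G) - fg`:
for `f ∈ H²[0,∞)` and `0 ≤ s ≤ t ≤ T`,
`∫₀ˢ |ξ_f(t-u) - ξ_f(s-u)| du ≤ (√T(w_G(t-s) + w_g(t-s)) + (T+1)√(t-s))·‖f‖_{H²}`. -/
theorem stmt13 (g G : ℝ → ℝ) (hgc : Continuous g) (hg0 : ∀ x, 0 ≤ g x)
    (hg1 : ∫ x in Ici (0:ℝ), g x = 1)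
    (hG : ∀ x, G x = ∫ u in (0:ℝ)..x, g u)
    (T : ℝ) (hT : 0 < T)
    (wG wg : ℝ → ℝ)
    (hwG : ∀ a b, a ∈ Icc (0:ℝ) T → b ∈ Icc (0:ℝ) T → |G a - G b| ≤ wG |a - b|)
    (hwg : ∀ a b, a ∈ Icc (0:ℝ) T → b ∈ Icc (0:ℝ) T → |g a - g b| ≤ wg |a - b|)
    (f f₁ f₂ : ℝ → ℝ)
    (hd1 : ∀ x, HasDerivAt f (f₁ x) x)
    (hd2 : ∀ x, HasDerivAt f₁ (f₂ x) x)
    (hf2 : IntegrableOn (fun x => (f x) ^ 2) (Ici 0))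
    (hf12 : IntegrableOn (fun x => (f₁ x) ^ 2) (Ici 0))
    (hf22 : IntegrableOn (fun x => (f₂ x) ^ 2) (Ici 0)) :
    ∀ s t : ℝ, 0 ≤ s → s ≤ t → t ≤ T →
      (∫ u in (0:ℝ)..s,
        |(f₁ (t - u) * (1 - G (t - u)) - f (t - u) * g (t - u)) -
          (f₁ (s - u) * (1 - G (s - u)) - f (s - u) * g (s - u))|)
        ≤ (Real.sqrt T * (wG (t - s) + wg (t - s)) + (T + 1) * Real.sqrt (t - s)) *
            Real.sqrt ((∫ x in Ici (0:ℝ), (f x) ^ 2) + (∫ x in Ici (0:ℝ), (f₁ x) ^ 2) +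
              (∫ x in Ici (0:ℝ), (f₂ x) ^ 2)) := by
  intro s t hs hst htT
  have hfc : Continuous f := continuous_iff_continuousAt.mpr fun x => (hd1 x).continuousAt
  have hf1c : Continuous f₁ := continuous_iff_continuousAt.mpr fun x => (hd2 x).continuousAt
  have hGc : Continuous G := by
    have : Continuous fun x => ∫ u in (0:ℝ)..x, g u :=
      intervalIntegral.continuous_primitive (fun a b => hgc.intervalIntegrable a b) 0
    exact (funext hG : G = _) ▸ this
  have hf1m : Measurable f₁ := hf1c.measurable
  have hfm : Measurable f := hfc.measurable
  have hf2m : Measurable f₂ := by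
    have : f₂ = deriv f₁ := funext fun x => ((hd2 x).deriv).symm
    rw [this]; exact measurable_deriv f₁
  -- integrability of g on Ici 0
  have hgInt : IntegrableOn g (Ici 0) := by
    by_contra h
    rw [integral_undef h] at hg1; norm_num at hg1
  -- bounds on G
  have hG0 : ∀ x, 0 ≤ x → 0 ≤ G x := by
    intro x hx
    rw [hG x]
    exact intervalIntegral.integral_nonneg hx fun u _ => hg0 u
  have hG1 : ∀ x, 0 ≤ x → G x ≤ 1 := by
    intro x hx
    rw [hG x, intervalIntegral.integral_of_le hx, ← hg1]
    exact setIntegral_mono_set hgInt (ae_of_all _ hg0)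
      (HasSubset.Subset.eventuallyLE fun y hy => le_of_lt hy.1)
  have hts : 0 ≤ t - s := sub_nonneg.mpr hst
  -- abbreviations
  set A := ∫ x in Ici (0:ℝ), (f x) ^ 2 with hA
  set B := ∫ x in Ici (0:ℝ), (f₁ x) ^ 2 with hB
  set C := ∫ x in Ici (0:ℝ), (f₂ x) ^ 2 with hC
  have hA0 : 0 ≤ A := setIntegral_nonneg measurableSet_Ici fun x _ => sq_nonneg _
  have hB0 : 0 ≤ B := setIntegral_nonneg measurableSet_Ici fun x _ => sq_nonneg _
  have hC0 : 0 ≤ C := setIntegral_nonneg measurableSet_Ici fun x _ => sq_nonneg _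
  set N := Real.sqrt (A + B + C) with hN
  have hsA : Real.sqrt A ≤ N := Real.sqrt_le_sqrt (by linarith)
  have hsB : Real.sqrt B ≤ N := Real.sqrt_le_sqrt (by linarith)
  have hsC : Real.sqrt C ≤ N := Real.sqrt_le_sqrt (by linarith)
  have hN0 : 0 ≤ N := Real.sqrt_nonneg _
  -- moduli nonneg
  have hwG0 : 0 ≤ wG (t - s) := by
    have := hwG (t - s) 0 ⟨hts, by linarith⟩ ⟨le_refl 0, hT.le⟩
    simp only [sub_zero] at this
    rw [abs_of_nonneg hts] at this
    exact le_trans (abs_nonneg _) this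
  have hwg0 : 0 ≤ wg (t - s) := by
    have := hwg (t - s) 0 ⟨hts, by linarith⟩ ⟨le_refl 0, hT.le⟩
    simp only [sub_zero] at this
    rw [abs_of_nonneg hts] at this
    exact le_trans (abs_nonneg _) this
  -- pointwise difference bounds
  have hdf : ∀ u ∈ Icc (0:ℝ) s, |f (t - u) - f (s - u)| ≤ Real.sqrt (t - s) * Real.sqrt B := by
    intro u hu
    have h1 : (0:ℝ) ≤ s - u := by linarith [hu.2]
    have h2 : s - u ≤ t - u := by linarith
    have := diff_bound hd1 hf1m hf12 h1 h2
    rwa [show t - u - (s - u) = t - s by ring] at this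
  have hdf1 : ∀ u ∈ Icc (0:ℝ) s, |f₁ (t - u) - f₁ (s - u)| ≤ Real.sqrt (t - s) * Real.sqrt C := by
    intro u hu
    have h1 : (0:ℝ) ≤ s - u := by linarith [hu.2]
    have h2 : s - u ≤ t - u := by linarith
    have := diff_bound hd2 hf2m hf22 h1 h2
    rwa [show t - u - (s - u) = t - s by ring] at this
  -- the four pieces
  set q1 : ℝ → ℝ := fun u => |f₁ (t - u) - f₁ (s - u)| with hq1
  set q2 : ℝ → ℝ := fun u => |f₁ (s - u)| * wG (t - s) with hq2
  set q3 : ℝ → ℝ := fun u => |f (t - u) - f (s - u)| * g (t - u) with hq3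
  set q4 : ℝ → ℝ := fun u => |f (s - u)| * wg (t - s) with hq4
  have hc1 : Continuous q1 := by fun_prop
  have hc2 : Continuous q2 := by fun_prop
  have hc3 : Continuous q3 := by fun_prop
  have hc4 : Continuous q4 := by fun_prop
  have hcL : Continuous fun u =>
      |(f₁ (t - u) * (1 - G (t - u)) - f (t - u) * g (t - u)) -
        (f₁ (s - u) * (1 - G (s - u)) - f (s - u) * g (s - u))| := by fun_prop
  -- pointwise bound
  have key : ∀ u ∈ Icc (0:ℝ) s,
      |(f₁ (t - u) * (1 - G (t - u)) - f (t - u) * g (t - u)) -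
        (f₁ (s - u) * (1 - G (s - u)) - f (s - u) * g (s - u))|
      ≤ q1 u + q2 u + q3 u + q4 u := by
    intro u hu
    have htu : t - u ∈ Icc (0:ℝ) T := ⟨by linarith [hu.2], by linarith [hu.1]⟩
    have hsu : s - u ∈ Icc (0:ℝ) T := ⟨by linarith [hu.2], by linarith [hu.1]⟩
    have hGb : |G (s - u) - G (t - u)| ≤ wG (t - s) := by
      have := hwG (s - u) (t - u) hsu htu
      rwa [show s - u - (t - u) = -(t - s) by ring, abs_neg, abs_of_nonneg hts] at this
    have hgb : |g (t - u) - g (s - u)| ≤ wg (t - s) := by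
      have := hwg (t - u) (s - u) htu hsu
      rwa [show t - u - (s - u) = t - s by ring, abs_of_nonneg hts] at this
    have h1G : |1 - G (t - u)| ≤ 1 := by
      rw [abs_of_nonneg (by linarith [hG1 _ htu.1])]
      linarith [hG0 _ htu.1]
    have decomp : (f₁ (t - u) * (1 - G (t - u)) - f (t - u) * g (t - u)) -
        (f₁ (s - u) * (1 - G (s - u)) - f (s - u) * g (s - u)) =
        (f₁ (t - u) - f₁ (s - u)) * (1 - G (t - u)) + f₁ (s - u) * (G (s - u) - G (t - u))
        - (f (t - u) - f (s - u)) * g (t - u) - f (s - u) * (g (t - u) - g (s - u)) := by ring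
    rw [decomp]
    have step : |(f₁ (t - u) - f₁ (s - u)) * (1 - G (t - u)) + f₁ (s - u) * (G (s - u) - G (t - u))
        - (f (t - u) - f (s - u)) * g (t - u) - f (s - u) * (g (t - u) - g (s - u))|
        ≤ |f₁ (t - u) - f₁ (s - u)| * |1 - G (t - u)| + |f₁ (s - u)| * |G (s - u) - G (t - u)|
        + |f (t - u) - f (s - u)| * |g (t - u)| + |f (s - u)| * |g (t - u) - g (s - u)| := by
      calc _ ≤ |(f₁ (t - u) - f₁ (s - u)) * (1 - G (t - u))| +
              |f₁ (s - u) * (G (s - u) - G (t - u))| +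
              |(f (t - u) - f (s - u)) * g (t - u)| +
              |f (s - u) * (g (t - u) - g (s - u))| := by
            apply (abs_sub _ _).trans
            gcongr
            apply (abs_sub _ _).trans
            gcongr
            exact abs_add_le _ _
        _ = _ := by rw [abs_mul, abs_mul, abs_mul, abs_mul]
    refine step.trans ?_
    have t1 : |f₁ (t - u) - f₁ (s - u)| * |1 - G (t - u)| ≤ q1 u := by
      simpa using mul_le_mul_of_nonneg_left h1G (abs_nonneg (f₁ (t - u) - f₁ (s - u)))
    have t2 : |f₁ (s - u)| * |G (s - u) - G (t - u)| ≤ q2 u :=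
      mul_le_mul_of_nonneg_left hGb (abs_nonneg _)
    have t3 : |f (t - u) - f (s - u)| * |g (t - u)| ≤ q3 u := by
      rw [abs_of_nonneg (hg0 _)]
    have t4 : |f (s - u)| * |g (t - u) - g (s - u)| ≤ q4 u :=
      mul_le_mul_of_nonneg_left hgb (abs_nonneg _)
    linarith
  -- integral mono and split
  have hmono : (∫ u in (0:ℝ)..s,
      |(f₁ (t - u) * (1 - G (t - u)) - f (t - u) * g (t - u)) -
        (f₁ (s - u) * (1 - G (s - u)) - f (s - u) * g (s - u))|)
      ≤ ∫ u in (0:ℝ)..s, (q1 u + q2 u + q3 u + q4 u) := by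
    apply intervalIntegral.integral_mono_on hs (hcL.intervalIntegrable 0 s)
      ((((hc1.add hc2).add hc3).add hc4).intervalIntegrable 0 s) key
  have hsplit : (∫ u in (0:ℝ)..s, (q1 u + q2 u + q3 u + q4 u)) =
      (∫ u in (0:ℝ)..s, q1 u) + (∫ u in (0:ℝ)..s, q2 u) +
      (∫ u in (0:ℝ)..s, q3 u) + (∫ u in (0:ℝ)..s, q4 u) := by
    rw [intervalIntegral.integral_add (f := fun u => q1 u + q2 u + q3 u) (((hc1.add hc2).add hc3).intervalIntegrable 0 s)
      (hc4.intervalIntegrable 0 s),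
      intervalIntegral.integral_add (f := fun u => q1 u + q2 u) ((hc1.add hc2).intervalIntegrable 0 s)
      (hc3.intervalIntegrable 0 s),
      intervalIntegral.integral_add (hc1.intervalIntegrable 0 s) (hc2.intervalIntegrable 0 s)]
  -- bound each piece
  have hI1 : (∫ u in (0:ℝ)..s, q1 u) ≤ T * (Real.sqrt (t - s) * Real.sqrt C) := by
    have hstep : (∫ u in (0:ℝ)..s, q1 u) ≤ ∫ _u in (0:ℝ)..s, Real.sqrt (t - s) * Real.sqrt C :=
      intervalIntegral.integral_mono_on hs (hc1.intervalIntegrable 0 s)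
        (intervalIntegrable_const) hdf1
    rw [intervalIntegral.integral_const] at hstep
    refine hstep.trans ?_
    have : (s - 0) • (Real.sqrt (t - s) * Real.sqrt C) = s * (Real.sqrt (t - s) * Real.sqrt C) := by
      simp [smul_eq_mul]
    rw [this]
    apply mul_le_mul_of_nonneg_right (by linarith)
      (mul_nonneg (Real.sqrt_nonneg _) (Real.sqrt_nonneg _))
  have hI2 : (∫ u in (0:ℝ)..s, |f₁ (s - u)|) ≤ Real.sqrt T * Real.sqrt B := by
    rw [intervalIntegral.integral_comp_sub_left (fun x => |f₁ x|) s]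
    simp only [sub_self, sub_zero]
    refine (cs_aux hf1m hf12 (le_refl 0) hs).trans ?_
    apply mul_le_mul_of_nonneg_right _ (Real.sqrt_nonneg _)
    exact Real.sqrt_le_sqrt (by linarith)
  have hI4 : (∫ u in (0:ℝ)..s, |f (s - u)|) ≤ Real.sqrt T * Real.sqrt A := by
    rw [intervalIntegral.integral_comp_sub_left (fun x => |f x|) s]
    simp only [sub_self, sub_zero]
    refine (cs_aux hfm hf2 (le_refl 0) hs).trans ?_
    apply mul_le_mul_of_nonneg_right _ (Real.sqrt_nonneg _)
    exact Real.sqrt_le_sqrt (by linarith)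
  have hgint : (∫ u in (0:ℝ)..s, g (t - u)) ≤ 1 := by
    rw [intervalIntegral.integral_comp_sub_left g t]
    have hadj : (∫ x in (0:ℝ)..(t - s), g x) + (∫ x in (t - s)..(t - 0), g x)
        = ∫ x in (0:ℝ)..(t - 0), g x :=
      intervalIntegral.integral_add_adjacent_intervals (hgc.intervalIntegrable 0 (t - s))
        (hgc.intervalIntegrable (t - s) (t - 0))
    have : (∫ x in (t - s)..(t - 0), g x) = G (t - 0) - G (t - s) := by
      rw [hG (t - 0), hG (t - s)]; linarith
    rw [this]
    have h1 := hG1 (t - 0) (by linarith)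
    have h2 := hG0 (t - s) hts
    linarith
  have hI3 : (∫ u in (0:ℝ)..s, q3 u) ≤ Real.sqrt (t - s) * Real.sqrt B := by
    set K := Real.sqrt (t - s) * Real.sqrt B with hK
    have hK0 : 0 ≤ K := mul_nonneg (Real.sqrt_nonneg _) (Real.sqrt_nonneg _)
    have hstep : (∫ u in (0:ℝ)..s, q3 u) ≤ ∫ u in (0:ℝ)..s, K * g (t - u) := by
      apply intervalIntegral.integral_mono_on hs (hc3.intervalIntegrable 0 s)
        ((continuous_const.mul (by fun_prop)).intervalIntegrable 0 s)
      intro u hu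
      exact mul_le_mul_of_nonneg_right (hdf u hu) (hg0 _)
    rw [intervalIntegral.integral_const_mul] at hstep
    refine hstep.trans ?_
    calc K * ∫ u in (0:ℝ)..s, g (t - u) ≤ K * 1 := mul_le_mul_of_nonneg_left hgint hK0
      _ = K := mul_one K
  -- q2 and q4 integrals
  have hI2' : (∫ u in (0:ℝ)..s, q2 u) ≤ Real.sqrt T * Real.sqrt B * wG (t - s) := by
    have : (∫ u in (0:ℝ)..s, q2 u) = (∫ u in (0:ℝ)..s, |f₁ (s - u)|) * wG (t - s) := by
      simp only [hq2]
      rw [intervalIntegral.integral_mul_const]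
    rw [this]
    exact mul_le_mul_of_nonneg_right hI2 hwG0
  have hI4' : (∫ u in (0:ℝ)..s, q4 u) ≤ Real.sqrt T * Real.sqrt A * wg (t - s) := by
    have : (∫ u in (0:ℝ)..s, q4 u) = (∫ u in (0:ℝ)..s, |f (s - u)|) * wg (t - s) := by
      simp only [hq4]
      rw [intervalIntegral.integral_mul_const]
    rw [this]
    exact mul_le_mul_of_nonneg_right hI4 hwg0
  -- assemble
  have hsT0 : 0 ≤ Real.sqrt T := Real.sqrt_nonneg _
  have hsts0 : 0 ≤ Real.sqrt (t - s) := Real.sqrt_nonneg _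
  have e1 : T * (Real.sqrt (t - s) * Real.sqrt C) ≤ T * Real.sqrt (t - s) * N := by
    rw [mul_assoc]
    exact mul_le_mul_of_nonneg_left (mul_le_mul_of_nonneg_left hsC hsts0) hT.le
  have e2 : Real.sqrt T * Real.sqrt B * wG (t - s) ≤ Real.sqrt T * N * wG (t - s) :=
    mul_le_mul_of_nonneg_right (mul_le_mul_of_nonneg_left hsB hsT0) hwG0
  have e3 : Real.sqrt (t - s) * Real.sqrt B ≤ Real.sqrt (t - s) * N :=
    mul_le_mul_of_nonneg_left hsB hsts0
  have e4 : Real.sqrt T * Real.sqrt A * wg (t - s) ≤ Real.sqrt T * N * wg (t - s) :=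
    mul_le_mul_of_nonneg_right (mul_le_mul_of_nonneg_left hsA hsT0) hwg0
  have final : T * Real.sqrt (t - s) * N + Real.sqrt T * N * wG (t - s) +
      Real.sqrt (t - s) * N + Real.sqrt T * N * wg (t - s) =
      (Real.sqrt T * (wG (t - s) + wg (t - s)) + (T + 1) * Real.sqrt (t - s)) * N := by ring
  calc (∫ u in (0:ℝ)..s,
        |(f₁ (t - u) * (1 - G (t - u)) - f (t - u) * g (t - u)) -
          (f₁ (s - u) * (1 - G (s - u)) - f (s - u) * g (s - u))|)
      ≤ (∫ u in (0:ℝ)..s, q1 u) + (∫ u in (0:ℝ)..s, q2 u) +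
        (∫ u in (0:ℝ)..s, q3 u) + (∫ u in (0:ℝ)..s, q4 u) := by rw [← hsplit]; exact hmono
    _ ≤ (Real.sqrt T * (wG (t - s) + wg (t - s)) + (T + 1) * Real.sqrt (t - s)) * N := by
        rw [← final]; linarith
end

section
/- Let g be a continuous probability density on [0,∞), let Γ be the map taking K ∈ D_ℝ[0,∞) to the H₋₂-valued function 𝒦 defined by 𝒦_t(f) = f(0)K(t) + ∫₀ᵗ K(u)(f(1-G))'(t-u) du. Then if K is continuous, 𝒦 is a continuous H₋₂-valued function, and Γ is continuous from C_ℝ[0,∞) to C_{H₋₂}[0,∞) when both are equipped with the topology of uniform convergence on compacts. -/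
open MeasureTheory Set
open scoped Interval

/-- The `H²[0,∞)` norm of `u` with first and second derivatives `u₁`, `u₂`. -/
noncomputable def H2norm (u u₁ u₂ : ℝ → ℝ) : ℝ :=
  Real.sqrt ((∫ x in Set.Ici (0:ℝ), (u x) ^ 2) + (∫ x in Set.Ici (0:ℝ), (u₁ x) ^ 2) +
    (∫ x in Set.Ici (0:ℝ), (u₂ x) ^ 2))

lemma exists_small (f : ℝ → ℝ) (h0 : IntegrableOn (fun x => (f x) ^ 2) (Ici 0))
    (ε : ℝ) (hε : 0 < ε) : ∃ y, 0 ≤ y ∧ (f y) ^ 2 < ε := by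
  by_contra h
  push_neg at h
  have hc : IntegrableOn (fun _ : ℝ => ε) (Ici 0) := by
    refine h0.mono' aestronglyMeasurable_const ?_
    filter_upwards [ae_restrict_mem measurableSet_Ici] with y hy
    simpa [abs_of_pos hε] using h y hy
  have := integrable_const_iff.mp hc
  simp [Measure.restrict_apply, Real.volume_Ici, ne_of_gt hε] at this
  exact absurd (measure_lt_top (volume.restrict (Ici (0:ℝ))) univ) (by simp [Real.volume_Ici])

lemma sq_le_int (f f₁ : ℝ → ℝ) (hf : ∀ x, HasDerivAt f (f₁ x) x)
    (h0 : IntegrableOn (fun x => (f x) ^ 2) (Ici 0))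
    (h1 : IntegrableOn (fun x => (f₁ x) ^ 2) (Ici 0)) :
    ∀ x, 0 ≤ x → (f x) ^ 2 ≤ (∫ x in Ici (0:ℝ), (f x) ^ 2) + ∫ x in Ici (0:ℝ), (f₁ x) ^ 2 := by
  intro x hx
  set I := (∫ x in Ici (0:ℝ), (f x) ^ 2) + ∫ x in Ici (0:ℝ), (f₁ x) ^ 2 with hI
  by_contra hlt
  push_neg at hlt
  obtain ⟨y, hy0, hy⟩ := exists_small f h0 ((f x)^2 - I) (by linarith)
  have hfc : Continuous f := by
    rw [continuous_iff_continuousAt]; exact fun z => (hf z).continuousAt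
  have hf1m : Measurable f₁ := by
    have : f₁ = deriv f := funext fun z => ((hf z).deriv).symm
    rw [this]; exact measurable_deriv f
  have hsub : Ι y x ⊆ Ici (0:ℝ) := fun s hs => le_trans (le_min hy0 hx) (le_of_lt hs.1)
  have hsum_int : IntegrableOn (fun s => (f s)^2 + (f₁ s)^2) (Ici 0) := h0.add h1
  have hsum_nonneg : ∀ s, (0:ℝ) ≤ (f s)^2 + (f₁ s)^2 := fun s => by positivity
  have hd_int : IntegrableOn (fun s => 2 * f s * f₁ s) (Ι y x) := by
    refine ((hsum_int.mono_set hsub).mono' ?_ ?_)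
    · exact ((hfc.measurable.const_mul 2).mul hf1m).aestronglyMeasurable
    · refine Filter.Eventually.of_forall fun s => ?_
      rw [Real.norm_eq_abs]
      calc |2 * f s * f₁ s| = 2 * |f s| * |f₁ s| := by
            rw [abs_mul, abs_mul, abs_two]
        _ ≤ |f s|^2 + |f₁ s|^2 := by nlinarith [sq_nonneg (|f s| - |f₁ s|)]
        _ = (f s)^2 + (f₁ s)^2 := by rw [sq_abs, sq_abs]
  have hd_ii : IntervalIntegrable (fun s => 2 * f s * f₁ s) volume y x :=
    (intervalIntegrable_iff).mpr hd_int
  have ftc : ∫ s in y..x, 2 * f s * f₁ s = (f x)^2 - (f y)^2 := by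
    have := intervalIntegral.integral_eq_sub_of_hasDerivAt
      (f := fun s => (f s)^2) (f' := fun s => 2 * f s * f₁ s)
      (fun s _ => by simpa using (hf s).fun_pow 2) hd_ii
    simpa using this
  have hbound : |∫ s in y..x, 2 * f s * f₁ s| ≤ I := by
    calc |∫ s in y..x, 2 * f s * f₁ s| ≤ ∫ s in Ι y x, |2 * f s * f₁ s| := by
          simpa only [Real.norm_eq_abs] using
          intervalIntegral.norm_integral_le_integral_norm_uIoc (f := fun s => 2 * f s * f₁ s) (a := y) (b := x) (μ := volume)
      _ ≤ ∫ s in Ι y x, ((f s)^2 + (f₁ s)^2) := by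
          refine setIntegral_mono_on hd_int.abs (hsum_int.mono_set hsub)
            measurableSet_uIoc fun s _ => ?_
          calc |2 * f s * f₁ s| = 2 * |f s| * |f₁ s| := by rw [abs_mul, abs_mul, abs_two]
            _ ≤ |f s|^2 + |f₁ s|^2 := by nlinarith [sq_nonneg (|f s| - |f₁ s|)]
            _ = (f s)^2 + (f₁ s)^2 := by rw [sq_abs, sq_abs]
      _ ≤ ∫ s in Ici (0:ℝ), ((f s)^2 + (f₁ s)^2) := by
          refine setIntegral_mono_set hsum_int
            (Filter.Eventually.of_forall hsum_nonneg) (HasSubset.Subset.eventuallyLE hsub)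
      _ = I := integral_add (h0) (h1)
  have : (f x)^2 - (f y)^2 ≤ I := by rw [← ftc]; exact (le_abs_self _).trans hbound
  linarith

lemma le_sqrt3 {a x y z : ℝ} (h : a^2 ≤ x + y + z) : |a| ≤ Real.sqrt (x + y + z) := by
  rw [← Real.sqrt_sq_eq_abs]; exact Real.sqrt_le_sqrt h

lemma Hbounds (f f₁ f₂ : ℝ → ℝ) (hf : ∀ x, HasDerivAt f (f₁ x) x)
    (hf1 : ∀ x, HasDerivAt f₁ (f₂ x) x)
    (h0 : IntegrableOn (fun x => (f x) ^ 2) (Ici 0))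
    (h1 : IntegrableOn (fun x => (f₁ x) ^ 2) (Ici 0))
    (h2 : IntegrableOn (fun x => (f₂ x) ^ 2) (Ici 0)) :
    (∀ s, 0 ≤ s → |f s| ≤ H2norm f f₁ f₂) ∧ (∀ s, 0 ≤ s → |f₁ s| ≤ H2norm f f₁ f₂)
      ∧ 0 ≤ H2norm f f₁ f₂ := by
  have hX : 0 ≤ ∫ x in Ici (0:ℝ), (f x) ^ 2 :=
    setIntegral_nonneg measurableSet_Ici fun x _ => sq_nonneg _
  have hZ : 0 ≤ ∫ x in Ici (0:ℝ), (f₂ x) ^ 2 :=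
    setIntegral_nonneg measurableSet_Ici fun x _ => sq_nonneg _
  refine ⟨fun s hs => ?_, fun s hs => ?_, Real.sqrt_nonneg _⟩
  · exact le_sqrt3 (by linarith [sq_le_int f f₁ hf h0 h1 s hs])
  · exact le_sqrt3 (by linarith [sq_le_int f₁ f₂ hf1 h1 h2 s hs])

/-- The convolution kernel `ξ_f = f₁(1-G) - fg`. -/
def xiF (g G f f₁ : ℝ → ℝ) (s : ℝ) : ℝ := f₁ s * (1 - G s) - f s * g s

lemma xi_bd (g G : ℝ → ℝ) (hg0 : ∀ x, 0 ≤ g x) (T Mg H : ℝ)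
    (hGnn : ∀ s, 0 ≤ s → 0 ≤ G s) (hG1 : ∀ x, 0 ≤ x → G x ≤ 1)
    (hMg : ∀ s ∈ Icc (0:ℝ) T, g s ≤ Mg)
    (f f₁ : ℝ → ℝ) (hfb : ∀ s, 0 ≤ s → |f s| ≤ H) (hf1b : ∀ s, 0 ≤ s → |f₁ s| ≤ H) :
    ∀ s ∈ Icc (0:ℝ) T, |xiF g G f f₁ s| ≤ (1 + Mg) * H := by
  intro s hs
  have hH : 0 ≤ H := le_trans (abs_nonneg _) (hfb 0 le_rfl)
  have hb1 : |f₁ s * (1 - G s)| ≤ H := by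
    rw [abs_mul]
    have h1G : |1 - G s| ≤ 1 :=
      abs_le.mpr ⟨by linarith [hG1 s hs.1], by linarith [hGnn s hs.1]⟩
    calc |f₁ s| * |1 - G s| ≤ H * 1 := mul_le_mul (hf1b s hs.1) h1G (abs_nonneg _) hH
      _ = H := mul_one H
  have hb2 : |f s * g s| ≤ H * Mg := by
    rw [abs_mul, abs_of_nonneg (hg0 s)]
    exact mul_le_mul (hfb s hs.1) (hMg s hs) (hg0 s) hH
  calc |xiF g G f f₁ s| ≤ |f₁ s * (1 - G s)| + |f s * g s| := abs_sub _ _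
    _ ≤ H + H * Mg := add_le_add hb1 hb2
    _ = (1 + Mg) * H := by ring

set_option maxHeartbeats 2000000 in
/-- Continuity of the map `Γ : K ↦ 𝒦` where `𝒦_t(f) = f(0)K(t) + ∫₀ᵗ K(u)ξ_f(t-u)du`,
`ξ_f = f'(1-G) - fg`, viewed as an `H₋₂`-valued function: on every `[0,T]` there is `c < ∞`
such that `|𝒦_t(f) - 𝒦̃_t(f)| ≤ c·sup_{[0,T]}|K - K̃|·‖f‖_{H²}`, and for continuous `K`
the map `t ↦ 𝒦_t` is continuous in the dual norm. -/
theorem stmt15 (g G : ℝ → ℝ) (hgc : Continuous g) (hg0 : ∀ x, 0 ≤ g x)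
    (hG : ∀ x, G x = ∫ u in (0:ℝ)..x, g u)
    (hG1 : ∀ x, 0 ≤ x → G x ≤ 1) :
    ∀ T : ℝ, 0 < T → ∃ c : ℝ, 0 < c ∧
      (∀ K K' : ℝ → ℝ, Continuous K → Continuous K' → ∀ η : ℝ,
        (∀ u ∈ Icc (0:ℝ) T, |K u - K' u| ≤ η) →
        ∀ t ∈ Icc (0:ℝ) T, ∀ f f₁ f₂ : ℝ → ℝ,
          (∀ x, HasDerivAt f (f₁ x) x) → (∀ x, HasDerivAt f₁ (f₂ x) x) →
          IntegrableOn (fun x => (f x) ^ 2) (Ici 0) →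
          IntegrableOn (fun x => (f₁ x) ^ 2) (Ici 0) →
          IntegrableOn (fun x => (f₂ x) ^ 2) (Ici 0) →
          |(f 0 * K t + ∫ u in (0:ℝ)..t,
              K u * (f₁ (t - u) * (1 - G (t - u)) - f (t - u) * g (t - u))) -
            (f 0 * K' t + ∫ u in (0:ℝ)..t,
              K' u * (f₁ (t - u) * (1 - G (t - u)) - f (t - u) * g (t - u)))|
            ≤ c * η * H2norm f f₁ f₂) ∧
      (∀ K : ℝ → ℝ, Continuous K → ∀ t ∈ Icc (0:ℝ) T, ∀ ε : ℝ, 0 < ε →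
        ∃ δ : ℝ, 0 < δ ∧ ∀ t' ∈ Icc (0:ℝ) T, |t' - t| < δ →
          ∀ f f₁ f₂ : ℝ → ℝ,
            (∀ x, HasDerivAt f (f₁ x) x) → (∀ x, HasDerivAt f₁ (f₂ x) x) →
            IntegrableOn (fun x => (f x) ^ 2) (Ici 0) →
            IntegrableOn (fun x => (f₁ x) ^ 2) (Ici 0) →
            IntegrableOn (fun x => (f₂ x) ^ 2) (Ici 0) →
            |(f 0 * K t' + ∫ u in (0:ℝ)..t',
                K u * (f₁ (t' - u) * (1 - G (t' - u)) - f (t' - u) * g (t' - u))) -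
              (f 0 * K t + ∫ u in (0:ℝ)..t,
                K u * (f₁ (t - u) * (1 - G (t - u)) - f (t - u) * g (t - u)))|
              ≤ ε * H2norm f f₁ f₂) := by
  intro T hT
  -- facts about G
  have hGc : Continuous G := by
    have h := intervalIntegral.continuous_primitive (μ := volume)
      (fun a b => hgc.intervalIntegrable a b) 0
    have : G = fun b => ∫ u in (0:ℝ)..b, g u := funext hG
    rw [this]; exact h
  have hGnn : ∀ s, 0 ≤ s → 0 ≤ G s := fun s hs => by
    rw [hG]; exact intervalIntegral.integral_nonneg_of_forall hs fun u => hg0 u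
  -- bound for g on [0,T]
  obtain ⟨Mg, hMg'⟩ := (isCompact_Icc (a := (0:ℝ)) (b := T)).exists_bound_of_continuousOn
    hgc.continuousOn
  have hMg : ∀ s ∈ Icc (0:ℝ) T, g s ≤ Mg := fun s hs =>
    le_trans (le_abs_self _) (by simpa [Real.norm_eq_abs] using hMg' s hs)
  have hMg0 : 0 ≤ Mg :=
    le_trans (hg0 0) (hMg 0 ⟨le_rfl, le_of_lt hT⟩)
  set B := 1 + Mg with hBdef
  have hB1 : 1 ≤ B := by simp [hBdef]; linarith
  have hB0 : 0 < B := by linarith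
  refine ⟨1 + T * B, by nlinarith, ?_, ?_⟩
  · -- Lipschitz part
    intro K K' hK hK' η hη t ht f f₁ f₂ hf hf1 h0 h1 h2
    obtain ⟨hfb, hf1b, hH⟩ := Hbounds f f₁ f₂ hf hf1 h0 h1 h2
    set H := H2norm f f₁ f₂ with hHdef
    have hξb : ∀ s ∈ Icc (0:ℝ) T, |xiF g G f f₁ s| ≤ B * H :=
      xi_bd g G hg0 T Mg H hGnn hG1 hMg f f₁ hfb hf1b
    have hfc : Continuous f := by
      rw [continuous_iff_continuousAt]; exact fun z => (hf z).continuousAt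
    have hf1c : Continuous f₁ := by
      rw [continuous_iff_continuousAt]; exact fun z => (hf1 z).continuousAt
    have hξc : Continuous (xiF g G f f₁) :=
      (hf1c.mul (continuous_const.sub hGc)).sub (hfc.mul hgc)
    have hη0 : 0 ≤ η := le_trans (abs_nonneg _) (hη 0 ⟨le_rfl, le_of_lt hT⟩)
    have hi1 : IntervalIntegrable (fun u => K u * xiF g G f f₁ (t - u)) volume 0 t :=
      (hK.mul (hξc.comp (continuous_const.sub continuous_id))).intervalIntegrable 0 t
    have hi2 : IntervalIntegrable (fun u => K' u * xiF g G f f₁ (t - u)) volume 0 t :=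
      (hK'.mul (hξc.comp (continuous_const.sub continuous_id))).intervalIntegrable 0 t
    have hsplit : ∫ u in (0:ℝ)..t, (K u - K' u) * xiF g G f f₁ (t - u)
        = (∫ u in (0:ℝ)..t, K u * xiF g G f f₁ (t - u))
          - ∫ u in (0:ℝ)..t, K' u * xiF g G f f₁ (t - u) := by
      rw [← intervalIntegral.integral_sub hi1 hi2]
      exact intervalIntegral.integral_congr fun u _ => by ring
    have key : (f 0 * K t + ∫ u in (0:ℝ)..t, K u * xiF g G f f₁ (t - u))
        - (f 0 * K' t + ∫ u in (0:ℝ)..t, K' u * xiF g G f f₁ (t - u))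
        = f 0 * (K t - K' t) + ∫ u in (0:ℝ)..t, (K u - K' u) * xiF g G f f₁ (t - u) := by
      rw [hsplit]; ring
    have hC0 : 0 ≤ η * (B * H) := by positivity
    have hIb : |∫ u in (0:ℝ)..t, (K u - K' u) * xiF g G f f₁ (t - u)|
        ≤ η * (B * H) * T := by
      have hb : ∀ u ∈ Ι (0:ℝ) t, ‖(K u - K' u) * xiF g G f f₁ (t - u)‖ ≤ η * (B * H) := by
        intro u hu
        rw [Set.uIoc_of_le ht.1] at hu
        have hu1 : u ∈ Icc (0:ℝ) T := ⟨le_of_lt hu.1, le_trans hu.2 ht.2⟩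
        have hu2 : t - u ∈ Icc (0:ℝ) T := ⟨by linarith [hu.2], by linarith [hu.1, ht.2]⟩
        rw [Real.norm_eq_abs, abs_mul]
        exact mul_le_mul (hη u hu1) (hξb _ hu2) (abs_nonneg _) hη0
      have h := intervalIntegral.norm_integral_le_of_norm_le_const hb
      rw [Real.norm_eq_abs] at h
      calc |∫ u in (0:ℝ)..t, (K u - K' u) * xiF g G f f₁ (t - u)|
          ≤ η * (B * H) * |t - 0| := h
        _ ≤ η * (B * H) * T := by
            rw [sub_zero, abs_of_nonneg ht.1]
            exact mul_le_mul_of_nonneg_left ht.2 hC0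
    have main : |(f 0 * K t + ∫ u in (0:ℝ)..t, K u * xiF g G f f₁ (t - u))
        - (f 0 * K' t + ∫ u in (0:ℝ)..t, K' u * xiF g G f f₁ (t - u))|
        ≤ (1 + T * B) * η * H := by
      rw [key]
      calc |f 0 * (K t - K' t) + ∫ u in (0:ℝ)..t, (K u - K' u) * xiF g G f f₁ (t - u)|
          ≤ |f 0 * (K t - K' t)| + |∫ u in (0:ℝ)..t, (K u - K' u) * xiF g G f f₁ (t - u)| :=
            abs_add_le _ _
        _ ≤ H * η + η * (B * H) * T := by
            refine add_le_add ?_ hIb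
            rw [abs_mul]
            exact mul_le_mul (hfb 0 le_rfl) (hη t ht) (abs_nonneg _) hH
        _ = (1 + T * B) * η * H := by ring
    simpa only [xiF] using main
  · -- continuity part
    intro K hK t ht ε hε
    obtain ⟨MK, hMK'⟩ := (isCompact_Icc (a := -T) (b := T)).exists_bound_of_continuousOn
      hK.continuousOn
    have hMK : ∀ x ∈ Icc (-T) T, |K x| ≤ MK := fun x hx => by
      simpa [Real.norm_eq_abs] using hMK' x hx
    have hMK0 : 0 ≤ MK :=
      le_trans (abs_nonneg _) (hMK 0 ⟨by linarith, by linarith⟩)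
    have hTB : (0:ℝ) < 1 + T * B := by nlinarith
    set ε₀ := ε / (2 * (1 + T * B)) with hε₀def
    have hε₀ : 0 < ε₀ := by positivity
    have huc := (isCompact_Icc (a := -T) (b := T)).uniformContinuousOn_of_continuous
      hK.continuousOn
    rw [Metric.uniformContinuousOn_iff] at huc
    obtain ⟨δ₀, hδ₀, hKuc⟩ := huc ε₀ hε₀
    have hMKB : (0:ℝ) < 1 + MK * B := by nlinarith
    set δ₂ := ε / (2 * (1 + MK * B)) with hδ₂def
    have hδ₂ : 0 < δ₂ := by positivity
    refine ⟨min δ₀ δ₂, lt_min hδ₀ hδ₂, ?_⟩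
    intro t' ht' hdist f f₁ f₂ hf hf1 h0 h1 h2
    obtain ⟨hfb, hf1b, hH⟩ := Hbounds f f₁ f₂ hf hf1 h0 h1 h2
    set H := H2norm f f₁ f₂ with hHdef
    have hξb : ∀ s ∈ Icc (0:ℝ) T, |xiF g G f f₁ s| ≤ B * H :=
      xi_bd g G hg0 T Mg H hGnn hG1 hMg f f₁ hfb hf1b
    have hfc : Continuous f := by
      rw [continuous_iff_continuousAt]; exact fun z => (hf z).continuousAt
    have hf1c : Continuous f₁ := by
      rw [continuous_iff_continuousAt]; exact fun z => (hf1 z).continuousAt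
    have hξc : Continuous (xiF g G f f₁) :=
      (hf1c.mul (continuous_const.sub hGc)).sub (hfc.mul hgc)
    -- substitution in the two integrals
    have sub1 : (∫ u in (0:ℝ)..t, K u * xiF g G f f₁ (t - u))
        = ∫ s in (0:ℝ)..t, K (t - s) * xiF g G f f₁ s := by
      have h := intervalIntegral.integral_comp_sub_left (a := (0:ℝ)) (b := t)
        (fun u => K (t - u) * xiF g G f f₁ u) t
      simp only [sub_sub_cancel, sub_self, sub_zero] at h
      exact h
    have sub1' : (∫ u in (0:ℝ)..t', K u * xiF g G f f₁ (t' - u))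
        = ∫ s in (0:ℝ)..t', K (t' - s) * xiF g G f f₁ s := by
      have h := intervalIntegral.integral_comp_sub_left (a := (0:ℝ)) (b := t')
        (fun u => K (t' - u) * xiF g G f f₁ u) t'
      simp only [sub_sub_cancel, sub_self, sub_zero] at h
      exact h
    have hit' : ∀ a b : ℝ, IntervalIntegrable (fun s => K (t' - s) * xiF g G f f₁ s) volume a b :=
      fun a b => (((hK.comp (continuous_const.sub continuous_id)).mul hξc).intervalIntegrable a b)
    have hit : ∀ a b : ℝ, IntervalIntegrable (fun s => K (t - s) * xiF g G f f₁ s) volume a b :=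
      fun a b => (((hK.comp (continuous_const.sub continuous_id)).mul hξc).intervalIntegrable a b)
    have hsplit : (∫ s in (0:ℝ)..t', K (t' - s) * xiF g G f f₁ s)
        = (∫ s in (0:ℝ)..t, K (t' - s) * xiF g G f f₁ s)
          + ∫ s in t..t', K (t' - s) * xiF g G f f₁ s :=
      (intervalIntegral.integral_add_adjacent_intervals (hit' 0 t) (hit' t t')).symm
    have hdiff : ∫ s in (0:ℝ)..t, (K (t' - s) - K (t - s)) * xiF g G f f₁ s
        = (∫ s in (0:ℝ)..t, K (t' - s) * xiF g G f f₁ s)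
          - ∫ s in (0:ℝ)..t, K (t - s) * xiF g G f f₁ s := by
      rw [← intervalIntegral.integral_sub (hit' 0 t) (hit 0 t)]
      exact intervalIntegral.integral_congr fun s _ => by ring
    have key : (f 0 * K t' + ∫ u in (0:ℝ)..t', K u * xiF g G f f₁ (t' - u))
        - (f 0 * K t + ∫ u in (0:ℝ)..t, K u * xiF g G f f₁ (t - u))
        = f 0 * (K t' - K t)
          + ((∫ s in (0:ℝ)..t, (K (t' - s) - K (t - s)) * xiF g G f f₁ s)
            + ∫ s in t..t', K (t' - s) * xiF g G f f₁ s) := by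
      rw [sub1', sub1, hsplit, hdiff]; ring
    have habs : |t' - t| ≤ δ₂ := le_of_lt (lt_of_lt_of_le hdist (min_le_right _ _))
    have hdistδ₀ : |t' - t| < δ₀ := lt_of_lt_of_le hdist (min_le_left _ _)
    have htm : t ∈ Icc (-T) T := ⟨by linarith [ht.1], ht.2⟩
    have ht'm : t' ∈ Icc (-T) T := ⟨by linarith [ht'.1], ht'.2⟩
    -- bound on the first term
    have b1 : |f 0 * (K t' - K t)| ≤ H * ε₀ := by
      rw [abs_mul]
      have : |K t' - K t| ≤ ε₀ := by
        have := hKuc t' ht'm t htm (by rwa [Real.dist_eq])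
        rw [Real.dist_eq] at this
        exact le_of_lt this
      exact mul_le_mul (hfb 0 le_rfl) this (abs_nonneg _) hH
    -- bound on the middle integral
    have hBH0 : (0:ℝ) ≤ B * H := by positivity
    have b2 : |∫ s in (0:ℝ)..t, (K (t' - s) - K (t - s)) * xiF g G f f₁ s|
        ≤ ε₀ * (B * H) * T := by
      have hb : ∀ s ∈ Ι (0:ℝ) t, ‖(K (t' - s) - K (t - s)) * xiF g G f f₁ s‖
          ≤ ε₀ * (B * H) := by
        intro s hs
        rw [Set.uIoc_of_le ht.1] at hs
        have hs1 : s ∈ Icc (0:ℝ) T := ⟨le_of_lt hs.1, le_trans hs.2 ht.2⟩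
        have hm1 : t' - s ∈ Icc (-T) T := ⟨by linarith [ht'.1, hs.2, ht.2], by linarith [hs.1, ht'.2]⟩
        have hm2 : t - s ∈ Icc (-T) T := ⟨by linarith [hs.2], by linarith [hs.1, ht.2]⟩
        have hd : dist (t' - s) (t - s) < δ₀ := by
          rw [Real.dist_eq]
          simpa using hdistδ₀
        have hKK : |K (t' - s) - K (t - s)| ≤ ε₀ := by
          have := hKuc _ hm1 _ hm2 hd
          rw [Real.dist_eq] at this
          exact le_of_lt this
        rw [Real.norm_eq_abs, abs_mul]
        exact mul_le_mul hKK (hξb s hs1) (abs_nonneg _) (le_of_lt hε₀)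
      have h := intervalIntegral.norm_integral_le_of_norm_le_const hb
      rw [Real.norm_eq_abs] at h
      calc |∫ s in (0:ℝ)..t, (K (t' - s) - K (t - s)) * xiF g G f f₁ s|
          ≤ ε₀ * (B * H) * |t - 0| := h
        _ ≤ ε₀ * (B * H) * T := by
            rw [sub_zero, abs_of_nonneg ht.1]
            exact mul_le_mul_of_nonneg_left ht.2 (by positivity)
    -- bound on the tail integral
    have b3 : |∫ s in t..t', K (t' - s) * xiF g G f f₁ s| ≤ MK * (B * H) * |t' - t| := by
      have hb : ∀ s ∈ Ι t t', ‖K (t' - s) * xiF g G f f₁ s‖ ≤ MK * (B * H) := by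
        intro s hs
        have hmin : (0:ℝ) ≤ min t t' := le_min ht.1 ht'.1
        have hmax : max t t' ≤ T := max_le ht.2 ht'.2
        have hs1 : s ∈ Icc (0:ℝ) T :=
          ⟨le_of_lt (lt_of_le_of_lt hmin hs.1), le_trans hs.2 hmax⟩
        have hm1 : t' - s ∈ Icc (-T) T :=
          ⟨by linarith [ht'.1, hs1.2], by linarith [hs1.1, ht'.2]⟩
        rw [Real.norm_eq_abs, abs_mul]
        exact mul_le_mul (hMK _ hm1) (hξb s hs1) (abs_nonneg _) hMK0
      have h := intervalIntegral.norm_integral_le_of_norm_le_const hb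
      rw [Real.norm_eq_abs] at h
      exact h
    -- put everything together
    have hεeq : ε₀ * (2 * (1 + T * B)) = ε := by
      rw [hε₀def]; field_simp
    have hδ₂eq : δ₂ * (2 * (1 + MK * B)) = ε := by
      rw [hδ₂def]; field_simp
    have haux2 : MK * B * δ₂ ≤ ε / 2 := by nlinarith
    have main : |(f 0 * K t' + ∫ u in (0:ℝ)..t', K u * xiF g G f f₁ (t' - u))
        - (f 0 * K t + ∫ u in (0:ℝ)..t, K u * xiF g G f f₁ (t - u))| ≤ ε * H := by
      rw [key]
      have step : |f 0 * (K t' - K t)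
          + ((∫ s in (0:ℝ)..t, (K (t' - s) - K (t - s)) * xiF g G f f₁ s)
            + ∫ s in t..t', K (t' - s) * xiF g G f f₁ s)|
          ≤ H * ε₀ + (ε₀ * (B * H) * T + MK * (B * H) * |t' - t|) := by
        calc |f 0 * (K t' - K t)
            + ((∫ s in (0:ℝ)..t, (K (t' - s) - K (t - s)) * xiF g G f f₁ s)
              + ∫ s in t..t', K (t' - s) * xiF g G f f₁ s)|
            ≤ |f 0 * (K t' - K t)|
              + |(∫ s in (0:ℝ)..t, (K (t' - s) - K (t - s)) * xiF g G f f₁ s)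
                + ∫ s in t..t', K (t' - s) * xiF g G f f₁ s| := abs_add_le _ _
          _ ≤ H * ε₀ + (ε₀ * (B * H) * T + MK * (B * H) * |t' - t|) :=
              add_le_add b1 ((abs_add_le _ _).trans (add_le_add b2 b3))
      refine step.trans ?_
      have hma : MK * B * |t' - t| ≤ ε / 2 :=
        le_trans (mul_le_mul_of_nonneg_left habs (mul_nonneg hMK0 hB0.le)) haux2
      have h3 : MK * B * |t' - t| * H ≤ ε / 2 * H := mul_le_mul_of_nonneg_right hma hH
      have e1H : ε₀ * H + ε₀ * (B * H) * T = ε / 2 * H := by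
        linear_combination (H / 2) * hεeq
      have hfin : H * ε₀ + (ε₀ * (B * H) * T + MK * (B * H) * |t' - t|) ≤ ε * H := by
        clear_value H ε₀ δ₂ B
        nlinarith [h3, e1H]
      exact hfin
    simpa only [xiF] using main
end
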